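/- There is a constant c > 0 depending only on n such that the following holds. Let q be an odd prime power, n ≥ 1, and let M be the adjacency matrix (over ℂ) of the sum-product digraph over M_n(𝔽_q). Then every eigenvalue λ ∈ ℂ of M with |λ| ≠ q^{n²} satisfies |λ| ≤ c · q^{n² − 1/2}. -/

import Mathlib

open Finset Matrix

section SumProductAux

lemma spdg_exists_nontrivial_addchar (F : Type) [Field F] [Fintype F] :
    ∃ φ : Multiplicative F →* ℂˣ, φ (Multiplicative.ofAdd (1:F)) ≠ 1 := by
  haveI : NeZero ((Monoid.exponent (Multiplicative F) : ℂ)) :=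
    ⟨Nat.cast_ne_zero.mpr Monoid.exponent_ne_zero_of_finite⟩
  refine CommGroup.exists_apply_ne_one_of_hasEnoughRootsOfUnity (Multiplicative F) ℂ ?_
  intro h
  have h' : (1 : F) = 0 := by
    have := congrArg Multiplicative.toAdd h
    simpa using this
  exact one_ne_zero h'

lemma spdg_trace_mul_stdBasis {n : ℕ} {F : Type} [Field F] [Fintype F] [DecidableEq F]
    (S : Matrix (Fin n) (Fin n) F) (i j : Fin n) (c : F) :
    Matrix.trace (S * Matrix.single j i c) = S i j * c := by
  rw [Matrix.trace, Finset.sum_eq_single i]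
  · simp [Matrix.diag]
  · intro k _ hk
    simp only [Matrix.diag]
    rw [Matrix.mul_single_apply_of_ne c j i k k hk]
  · simp

lemma spdg_matrix_char_sum {n : ℕ} {F : Type} [Field F] [Fintype F] [DecidableEq F]
    (ψ : F → ℂ) (hadd : ∀ a b, ψ (a + b) = ψ a * ψ b) (h0 : ψ 0 = 1) (h1 : ψ 1 ≠ 1)
    (E : Matrix (Fin n) (Fin n) F) :
    ∑ X : Matrix (Fin n) (Fin n) F, ψ (Matrix.trace (E * X)) =
      if E = 0 then (Fintype.card (Matrix (Fin n) (Fin n) F) : ℂ) else 0 := by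
  split_ifs with hE
  · subst hE
    simp [h0, Finset.card_univ]
  · obtain ⟨i, j, hij⟩ : ∃ i j, E i j ≠ 0 := by
      by_contra h
      push_neg at h
      exact hE (by ext i j; simpa using h i j)
    set C₀ : Matrix (Fin n) (Fin n) F := Matrix.single j i (E i j)⁻¹ with hC₀
    have htr : Matrix.trace (E * C₀) = 1 := by
      rw [hC₀, spdg_trace_mul_stdBasis, mul_inv_cancel₀ hij]
    have reindex : ∑ X : Matrix (Fin n) (Fin n) F, ψ (Matrix.trace (E * X)) =
        ∑ X : Matrix (Fin n) (Fin n) F, ψ (Matrix.trace (E * (X + C₀))) := by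
      refine Fintype.sum_equiv (Equiv.subRight C₀) _ _ fun X => ?_
      simp
    have expand : ∀ X : Matrix (Fin n) (Fin n) F,
        ψ (Matrix.trace (E * (X + C₀))) = ψ (Matrix.trace (E * X)) * ψ 1 := by
      intro X
      have : Matrix.trace (E * (X + C₀)) = Matrix.trace (E * X) + 1 := by
        simp only [Matrix.mul_add, Matrix.trace_add, htr]
      rw [this, hadd]
    have key : ∑ X : Matrix (Fin n) (Fin n) F, ψ (Matrix.trace (E * X)) =
        (∑ X : Matrix (Fin n) (Fin n) F, ψ (Matrix.trace (E * X))) * ψ 1 := by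
      calc ∑ X : Matrix (Fin n) (Fin n) F, ψ (Matrix.trace (E * X))
          = ∑ X : Matrix (Fin n) (Fin n) F, ψ (Matrix.trace (E * (X + C₀))) := reindex
        _ = ∑ X : Matrix (Fin n) (Fin n) F, ψ (Matrix.trace (E * X)) * ψ 1 :=
            Finset.sum_congr rfl fun X _ => expand X
        _ = (∑ X : Matrix (Fin n) (Fin n) F, ψ (Matrix.trace (E * X))) * ψ 1 :=
            (Finset.sum_mul _ _ _).symm
    by_contra hs
    have hk := key
    nth_rewrite 1 [← mul_one (∑ X : Matrix (Fin n) (Fin n) F, ψ (Matrix.trace (E * X)))] at hk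
    exact h1 (mul_left_cancel₀ hs hk).symm

lemma spdg_coset_count {n : ℕ} {F : Type} [Field F] [Fintype F] [DecidableEq F]
    {S : Matrix (Fin n) (Fin n) F} (hS : S ≠ 0) (A : Matrix (Fin n) (Fin n) F) :
    Fintype.card F * (Finset.univ.filter (fun B : Matrix (Fin n) (Fin n) F => B * S = S * A)).card ≤
      Fintype.card (Matrix (Fin n) (Fin n) F) := by
  classical
  set K := LinearMap.ker (LinearMap.mulRight F S) with hK
  have hcardK : Fintype.card K =
      (Finset.univ.filter (fun X : Matrix (Fin n) (Fin n) F => X * S = 0)).card := by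
    rw [← Fintype.card_subtype]
    exact Fintype.card_congr (Equiv.subtypeEquivRight fun X => by
      simp [hK, LinearMap.mem_ker, LinearMap.mulRight_apply])
  have hTK : (Finset.univ.filter
      (fun B : Matrix (Fin n) (Fin n) F => B * S = S * A)).card ≤ Fintype.card K := by
    rcases (Finset.univ.filter
        (fun B : Matrix (Fin n) (Fin n) F => B * S = S * A)).eq_empty_or_nonempty with h | h
    · simp [h]
    · obtain ⟨B₀, hB₀⟩ := h
      rw [Finset.mem_filter] at hB₀
      rw [hcardK]
      refine Finset.card_le_card_of_injOn (fun B => B - B₀) ?_ ?_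
      · intro B hB
        rw [Finset.mem_coe, Finset.mem_filter] at hB ⊢
        refine ⟨Finset.mem_univ _, ?_⟩
        rw [sub_mul, hB.2, hB₀.2, sub_self]
      · intro a _ b _ hab
        simpa using hab
  have hKtop : K ≠ ⊤ := by
    intro h
    have h1 : (1 : Matrix (Fin n) (Fin n) F) ∈ K := h ▸ Submodule.mem_top
    rw [hK, LinearMap.mem_ker, LinearMap.mulRight_apply, one_mul] at h1
    exact hS h1
  have hlt : Module.finrank F K < Module.finrank F (Matrix (Fin n) (Fin n) F) :=
    Submodule.finrank_lt hKtop
  have hcard1 : Fintype.card K = Fintype.card F ^ Module.finrank F K := Module.card_eq_pow_finrank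
  have hcard2 : Fintype.card (Matrix (Fin n) (Fin n) F) =
      Fintype.card F ^ Module.finrank F (Matrix (Fin n) (Fin n) F) := Module.card_eq_pow_finrank
  calc Fintype.card F * (Finset.univ.filter
        (fun B : Matrix (Fin n) (Fin n) F => B * S = S * A)).card
      ≤ Fintype.card F * Fintype.card K := Nat.mul_le_mul_left _ hTK
    _ = Fintype.card F ^ (Module.finrank F K + 1) := by rw [hcard1]; ring
    _ ≤ Fintype.card F ^ Module.finrank F (Matrix (Fin n) (Fin n) F) :=
        Nat.pow_le_pow_right Fintype.card_pos hlt
    _ = Fintype.card (Matrix (Fin n) (Fin n) F) := hcard2.symm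

end SumProductAux

/-- Theorem 4.1 (eigenvalue bound): every eigenvalue λ of the adjacency matrix of
the sum-product digraph with |λ| ≠ q^{n²} satisfies |λ| ≤ c · q^{n² - 1/2}. -/
theorem sum_product_digraph_eigenvalue_bound (n : ℕ) (hn : 1 ≤ n) :
    ∃ c : ℝ, 0 < c ∧
      ∀ (F : Type) [Field F] [Fintype F] [DecidableEq F],
        Odd (Fintype.card F) →
        ∀ (lam : ℂ)
          (v : Matrix (Fin n) (Fin n) F × Matrix (Fin n) (Fin n) F → ℂ),
          v ≠ 0 →
          (Matrix.of fun p q : Matrix (Fin n) (Fin n) F × Matrix (Fin n) (Fin n) F =>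
              if p.1 * q.1 = p.2 + q.2 then (1 : ℂ) else 0).mulVec v = lam • v →
          ‖lam‖ ≠ (Fintype.card F : ℝ) ^ ((n : ℝ) ^ 2) →
          ‖lam‖ ≤ c * (Fintype.card F : ℝ) ^ ((n : ℝ) ^ 2 - 1 / 2) := by
  classical
  refine ⟨1, one_pos, ?_⟩
  intro F _ _ _ hodd lam v hv0 hv hlam
  set q : ℕ := Fintype.card F with hq
  set Q : ℕ := Fintype.card (Matrix (Fin n) (Fin n) F) with hQdef
  have hqpos : (0:ℝ) < (q:ℝ) := by exact_mod_cast Fintype.card_pos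
  have hQpos : (0:ℕ) < Q := Fintype.card_pos
  have hQ : Q = q ^ (n * n) := by
    rw [hQdef, Module.card_eq_pow_finrank (K := F), Module.finrank_matrix]
    simp [Module.finrank_self]
    rfl
  -- the additive character
  obtain ⟨φ, hφ⟩ := spdg_exists_nontrivial_addchar F
  set ψ : F → ℂ := fun x => ((φ (Multiplicative.ofAdd x) : ℂˣ) : ℂ) with hψ
  have hadd : ∀ a b : F, ψ (a + b) = ψ a * ψ b := by
    intro a b
    simp only [hψ]
    rw [← Units.val_mul, ← _root_.map_mul]
    rfl
  have h0 : ψ 0 = 1 := by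
    simp only [hψ]
    rw [show Multiplicative.ofAdd (0:F) = 1 from rfl, _root_.map_one, Units.val_one]
  have h1 : ψ 1 ≠ 1 := fun h => hφ (Units.ext (h.trans Units.val_one.symm))
  -- Step 1 : eigenvalue equation
  have key1 : ∀ A C : Matrix (Fin n) (Fin n) F,
      lam * v (A, C) = ∑ B : Matrix (Fin n) (Fin n) F, v (B, A * B - C) := by
    intro A C
    have h := congrFun hv (A, C)
    simp only [Matrix.mulVec, dotProduct, Matrix.of_apply, Pi.smul_apply, smul_eq_mul] at h
    rw [← h, Fintype.sum_prod_type]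
    refine Finset.sum_congr rfl fun B _ => ?_
    have step : ∀ D : Matrix (Fin n) (Fin n) F,
        (if A * B = C + D then (1:ℂ) else 0) * v (B, D)
          = if D = A * B - C then v (B, D) else 0 := by
      intro D
      by_cases hD : D = A * B - C
      · subst hD
        rw [if_pos (by abel), one_mul, if_pos rfl]
      · rw [if_neg, zero_mul, if_neg hD]
        intro hc
        exact hD (by rw [hc]; abel)
    rw [Finset.sum_congr rfl fun D _ => step D,
      Finset.sum_ite_eq' Finset.univ (A * B - C) (fun D => v (B, D))]
    simp
  -- Step 2 : iterate
  have key2 : ∀ A C : Matrix (Fin n) (Fin n) F,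
      lam ^ 2 * v (A, C) =
        ∑ B : Matrix (Fin n) (Fin n) F, ∑ B' : Matrix (Fin n) (Fin n) F,
          v (B', B * B' - A * B + C) := by
    intro A C
    have e1 : lam ^ 2 * v (A, C) = lam * (lam * v (A, C)) := by ring
    rw [e1, key1 A C, Finset.mul_sum]
    refine Finset.sum_congr rfl fun B _ => ?_
    rw [key1 B (A * B - C)]
    refine Finset.sum_congr rfl fun B' _ => ?_
    have : B * B' - (A * B - C) = B * B' - A * B + C := by abel
    rw [this]
  -- Fourier coefficients
  set f : Matrix (Fin n) (Fin n) F → Matrix (Fin n) (Fin n) F → ℂ :=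
    fun S A => ∑ C : Matrix (Fin n) (Fin n) F, ψ (Matrix.trace (S * C)) * v (A, C) with hf
  -- Step 3 : the key identity
  have key3 : ∀ S A : Matrix (Fin n) (Fin n) F,
      lam ^ 2 * f S A =
        ∑ B' : Matrix (Fin n) (Fin n) F,
          (if B' * S = S * A then (Q:ℂ) else 0) * f S B' := by
    intro S A
    have inner : ∀ B B' : Matrix (Fin n) (Fin n) F,
        ∑ C : Matrix (Fin n) (Fin n) F,
            ψ (Matrix.trace (S * C)) * v (B', B * B' - A * B + C)
          = ψ (Matrix.trace (S * (A * B - B * B'))) * f S B' := by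
      intro B B'
      rw [hf]
      simp only
      rw [Finset.mul_sum]
      refine Fintype.sum_equiv (Equiv.addRight (B * B' - A * B)) _ _ fun C => ?_
      simp only [Equiv.coe_addRight]
      have harg : B * B' - A * B + C = C + (B * B' - A * B) := by abel
      have htr : Matrix.trace (S * (A * B - B * B'))
          + Matrix.trace (S * (C + (B * B' - A * B))) = Matrix.trace (S * C) := by
        rw [← Matrix.trace_add]
        congr 1
        noncomm_ring
      rw [harg, ← mul_assoc, ← hadd, htr]
    calc lam ^ 2 * f S A
        = ∑ C : Matrix (Fin n) (Fin n) F,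
            ψ (Matrix.trace (S * C)) * (lam ^ 2 * v (A, C)) := by
          rw [hf]
          simp only
          rw [Finset.mul_sum]
          exact Finset.sum_congr rfl fun C _ => by ring
      _ = ∑ C : Matrix (Fin n) (Fin n) F, ∑ B : Matrix (Fin n) (Fin n) F,
            ∑ B' : Matrix (Fin n) (Fin n) F,
              ψ (Matrix.trace (S * C)) * v (B', B * B' - A * B + C) := by
          refine Finset.sum_congr rfl fun C _ => ?_
          rw [key2 A C, Finset.mul_sum]
          exact Finset.sum_congr rfl fun B _ => Finset.mul_sum _ _ _
      _ = ∑ B : Matrix (Fin n) (Fin n) F, ∑ B' : Matrix (Fin n) (Fin n) F,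
            ∑ C : Matrix (Fin n) (Fin n) F,
              ψ (Matrix.trace (S * C)) * v (B', B * B' - A * B + C) := by
          rw [Finset.sum_comm]
          exact Finset.sum_congr rfl fun B _ => Finset.sum_comm
      _ = ∑ B : Matrix (Fin n) (Fin n) F, ∑ B' : Matrix (Fin n) (Fin n) F,
            ψ (Matrix.trace (S * (A * B - B * B'))) * f S B' := by
          exact Finset.sum_congr rfl fun B _ =>
            Finset.sum_congr rfl fun B' _ => inner B B'
      _ = ∑ B' : Matrix (Fin n) (Fin n) F, ∑ B : Matrix (Fin n) (Fin n) F,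
            ψ (Matrix.trace (S * (A * B - B * B'))) * f S B' := Finset.sum_comm
      _ = ∑ B' : Matrix (Fin n) (Fin n) F,
            (if B' * S = S * A then (Q:ℂ) else 0) * f S B' := by
          refine Finset.sum_congr rfl fun B' _ => ?_
          rw [← Finset.sum_mul]
          congr 1
          have tr_eq : ∀ B : Matrix (Fin n) (Fin n) F,
              Matrix.trace (S * (A * B - B * B'))
                = Matrix.trace ((S * A - B' * S) * B) := by
            intro B
            rw [Matrix.mul_sub, Matrix.sub_mul, Matrix.trace_sub, Matrix.trace_sub,
              ← Matrix.mul_assoc, ← Matrix.mul_assoc, Matrix.trace_mul_cycle S B B']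
          rw [Finset.sum_congr rfl fun B _ => congrArg ψ (tr_eq B),
            spdg_matrix_char_sum ψ hadd h0 h1 (S * A - B' * S)]
          exact if_congr (by rw [sub_eq_zero]; exact eq_comm) rfl rfl
      _ = _ := rfl
  -- Step 4 : some Fourier coefficient is nonzero
  have nonvanish : ∃ S A : Matrix (Fin n) (Fin n) F, f S A ≠ 0 := by
    by_contra hcon
    push_neg at hcon
    obtain ⟨p, hp⟩ := Function.ne_iff.mp hv0
    have hp' : v p ≠ 0 := by simpa using hp
    have W : ∑ S : Matrix (Fin n) (Fin n) F, ψ (Matrix.trace (S * p.2)) * f (-S) p.1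
        = (Q:ℂ) * v p := by
      calc ∑ S : Matrix (Fin n) (Fin n) F, ψ (Matrix.trace (S * p.2)) * f (-S) p.1
          = ∑ S : Matrix (Fin n) (Fin n) F, ∑ C : Matrix (Fin n) (Fin n) F,
              ψ (Matrix.trace (S * p.2)) * (ψ (Matrix.trace ((-S) * C)) * v (p.1, C)) := by
            refine Finset.sum_congr rfl fun S _ => ?_
            rw [hf]
            simp only
            rw [Finset.mul_sum]
        _ = ∑ C : Matrix (Fin n) (Fin n) F, ∑ S : Matrix (Fin n) (Fin n) F,
              ψ (Matrix.trace (S * (p.2 - C))) * v (p.1, C) := by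
            rw [Finset.sum_comm]
            refine Finset.sum_congr rfl fun C _ => Finset.sum_congr rfl fun S _ => ?_
            rw [← mul_assoc, ← hadd]
            congr 2
            rw [← Matrix.trace_add]
            congr 1
            noncomm_ring
        _ = ∑ C : Matrix (Fin n) (Fin n) F,
              (if p.2 - C = 0 then (Q:ℂ) else 0) * v (p.1, C) := by
            refine Finset.sum_congr rfl fun C _ => ?_
            rw [← Finset.sum_mul]
            congr 1
            rw [← spdg_matrix_char_sum ψ hadd h0 h1 (p.2 - C)]
            exact Finset.sum_congr rfl fun S _ =>
              congrArg ψ (Matrix.trace_mul_comm S (p.2 - C))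
        _ = (Q:ℂ) * v p := by
            have coll : ∀ C : Matrix (Fin n) (Fin n) F,
                (if p.2 - C = 0 then (Q:ℂ) else 0) * v (p.1, C)
                  = if C = p.2 then (Q:ℂ) * v (p.1, C) else 0 := by
              intro C
              by_cases h : C = p.2
              · simp [h]
              · rw [if_neg (fun hc => h (by rw [← sub_eq_zero]; rw [sub_eq_zero] at hc ⊢; exact hc.symm)), zero_mul, if_neg h]
            rw [Finset.sum_congr rfl fun C _ => coll C,
              Finset.sum_ite_eq' Finset.univ p.2 (fun C => (Q:ℂ) * v (p.1, C))]
            simp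
    rw [Finset.sum_congr rfl (fun S _ => by rw [hcon (-S) p.1, mul_zero]),
      Finset.sum_const_zero] at W
    have hQne : (Q:ℂ) ≠ 0 := Nat.cast_ne_zero.mpr hQpos.ne'
    exact hp' (by
      rcases mul_eq_zero.mp W.symm with h | h
      · exact absurd h hQne
      · exact h)
  obtain ⟨S, A₁, hfSA⟩ := nonvanish
  -- casting facts
  have hQR : ((Q:ℝ)) = (q:ℝ) ^ (n * n) := by exact_mod_cast congrArg (Nat.cast (R := ℝ)) hQ
  have hrpow_nn : (q:ℝ) ^ ((n:ℝ) ^ 2) = (q:ℝ) ^ (n * n : ℕ) := by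
    rw [← Real.rpow_natCast (q:ℝ) (n * n)]
    congr 1
    push_cast
    ring
  by_cases hlam0 : lam = 0
  · rw [hlam0, norm_zero, one_mul]
    positivity
  by_cases hS0 : S = 0
  · exfalso
    subst hS0
    have h4 : ∀ A : Matrix (Fin n) (Fin n) F,
        lam ^ 2 * f 0 A = (Q:ℂ) * ∑ B : Matrix (Fin n) (Fin n) F, f 0 B := by
      intro A
      rw [key3 0 A]
      simp [Finset.mul_sum]
    have hTot : lam ^ 2 * (∑ B : Matrix (Fin n) (Fin n) F, f 0 B)
        = (Q:ℂ) ^ 2 * (∑ B : Matrix (Fin n) (Fin n) F, f 0 B) := by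
      have hsumA := Finset.sum_congr rfl fun A (_ : A ∈ Finset.univ) => h4 A
      rw [← Finset.mul_sum, Finset.sum_const, Finset.card_univ] at hsumA
      rw [hsumA, nsmul_eq_mul]
      push_cast
      ring
    have hTotne : (∑ B : Matrix (Fin n) (Fin n) F, f 0 B) ≠ 0 := by
      intro h
      have := h4 A₁
      rw [h, mul_zero, mul_eq_zero] at this
      rcases this with h' | h'
      · exact hlam0 ((pow_eq_zero_iff two_ne_zero).mp h')
      · exact hfSA h'
    have hlam2 : lam ^ 2 = (Q:ℂ) ^ 2 := mul_right_cancel₀ hTotne hTot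
    have habs : ‖lam‖ ^ 2 = (Q:ℝ) ^ 2 := by
      have := congrArg (‖·‖) hlam2
      rwa [norm_pow, norm_pow, Complex.norm_natCast] at this
    have : ‖lam‖ = (Q:ℝ) := by
      have h1' : ‖lam‖ = Real.sqrt (‖lam‖ ^ 2) :=
        (Real.sqrt_sq (norm_nonneg lam)).symm
      rw [h1', habs, Real.sqrt_sq (Nat.cast_nonneg Q)]
    exact hlam (by rw [this, hQR, hrpow_nn])
  -- main case : S ≠ 0
  obtain ⟨A₀, _, hmax⟩ := Finset.exists_max_image Finset.univ
    (fun A => ‖f S A‖) ⟨A₁, Finset.mem_univ _⟩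
  have hpos : 0 < ‖f S A₀‖ :=
    lt_of_lt_of_le (norm_pos_iff.mpr hfSA) (hmax A₁ (Finset.mem_univ _))
  set T : Finset (Matrix (Fin n) (Fin n) F) :=
    Finset.univ.filter (fun B : Matrix (Fin n) (Fin n) F => B * S = S * A₀) with hT
  have hsum : lam ^ 2 * f S A₀ = (Q:ℂ) * ∑ B ∈ T, f S B := by
    rw [key3 S A₀, Finset.mul_sum]
    calc ∑ B' : Matrix (Fin n) (Fin n) F, (if B' * S = S * A₀ then (Q:ℂ) else 0) * f S B'
        = ∑ B' : Matrix (Fin n) (Fin n) F,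
            (if B' * S = S * A₀ then (Q:ℂ) * f S B' else 0) := by
          refine Finset.sum_congr rfl fun B' _ => ?_
          by_cases h : B' * S = S * A₀ <;> simp [h]
      _ = ∑ B ∈ T, (Q:ℂ) * f S B := (Finset.sum_filter _ _).symm
  have habs : ‖lam‖ ^ 2 * ‖f S A₀‖
      ≤ (Q:ℝ) * (T.card * ‖f S A₀‖) := by
    calc ‖lam‖ ^ 2 * ‖f S A₀‖
        = ‖lam ^ 2 * f S A₀‖ := by rw [norm_mul, norm_pow]
      _ = ‖(Q:ℂ) * ∑ B ∈ T, f S B‖ := by rw [hsum]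
      _ = (Q:ℝ) * ‖∑ B ∈ T, f S B‖ := by
          rw [norm_mul, Complex.norm_natCast]
      _ ≤ (Q:ℝ) * ∑ B ∈ T, ‖f S B‖ :=
          mul_le_mul_of_nonneg_left (norm_sum_le _ _) (Nat.cast_nonneg Q)
      _ ≤ (Q:ℝ) * (T.card * ‖f S A₀‖) := by
          refine mul_le_mul_of_nonneg_left ?_ (Nat.cast_nonneg Q)
          have := Finset.sum_le_card_nsmul T (fun B => ‖f S B‖)
            (‖f S A₀‖) (fun B _ => hmax B (Finset.mem_univ _))
          rwa [nsmul_eq_mul] at this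
  have hx2 : ‖lam‖ ^ 2 ≤ (Q:ℝ) * T.card := by
    have := (mul_le_mul_iff_left₀ hpos).mp (by
      calc ‖lam‖ ^ 2 * ‖f S A₀‖
          ≤ (Q:ℝ) * (T.card * ‖f S A₀‖) := habs
        _ = ((Q:ℝ) * T.card) * ‖f S A₀‖ := by ring)
    exact this
  have hcount := spdg_coset_count hS0 A₀
  have hqx2 : (q:ℝ) * ‖lam‖ ^ 2 ≤ (Q:ℝ) * (Q:ℝ) := by
    calc (q:ℝ) * ‖lam‖ ^ 2
        ≤ (q:ℝ) * ((Q:ℝ) * T.card) := by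
          exact mul_le_mul_of_nonneg_left hx2 (Nat.cast_nonneg q)
      _ = (Q:ℝ) * ((q:ℝ) * T.card) := by ring
      _ ≤ (Q:ℝ) * (Q:ℝ) := by
          refine mul_le_mul_of_nonneg_left ?_ (Nat.cast_nonneg Q)
          exact_mod_cast hcount
  have hQQ : (Q:ℝ) * (Q:ℝ) = (q:ℝ) ^ (2 * (n * n) : ℕ) := by
    rw [hQR, ← pow_add]
    congr 1
    ring
  have hfinal : ‖lam‖ ^ 2 ≤ (q:ℝ) ^ (2 * (n * n) : ℕ) / (q:ℝ) := by
    rw [le_div_iff₀ hqpos]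
    calc ‖lam‖ ^ 2 * (q:ℝ) = (q:ℝ) * ‖lam‖ ^ 2 := by ring
      _ ≤ (Q:ℝ) * (Q:ℝ) := hqx2
      _ = (q:ℝ) ^ (2 * (n * n) : ℕ) := hQQ
  have hP2 : ((q:ℝ) ^ ((n:ℝ) ^ 2 - 1 / 2)) ^ 2 = (q:ℝ) ^ (2 * (n * n) : ℕ) / (q:ℝ) := by
    have hrhs : (q:ℝ) ^ (2 * (n * n) : ℕ) / (q:ℝ)
        = (q:ℝ) ^ (((2 * (n * n) : ℕ) : ℝ) - 1) := by
      rw [Real.rpow_sub hqpos, Real.rpow_one, Real.rpow_natCast]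
    rw [hrhs, sq, ← Real.rpow_add hqpos]
    congr 1
    push_cast
    ring
  have hxP : ‖lam‖ ≤ (q:ℝ) ^ ((n:ℝ) ^ 2 - 1 / 2) := by
    have h1' : ‖lam‖ = Real.sqrt (‖lam‖ ^ 2) :=
      (Real.sqrt_sq (norm_nonneg lam)).symm
    have h2' : (q:ℝ) ^ ((n:ℝ) ^ 2 - 1 / 2)
        = Real.sqrt (((q:ℝ) ^ ((n:ℝ) ^ 2 - 1 / 2)) ^ 2) :=
      (Real.sqrt_sq (Real.rpow_nonneg hqpos.le _)).symm
    rw [h1', h2']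
    exact Real.sqrt_le_sqrt (by rw [hP2]; exact hfinal)
  rw [one_mul]
  exact hxP
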